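/- Let M be a 2×2 real matrix with determinant 1 and let L > 0. There exists a real number k such that det(M − e^{ikL}·I) = 0 (as a complex 2×2 determinant) if and only if tr(M) ∈ [−2, 2]. -/

import Mathlib

open Matrix Complex

/-- For `M ∈ SL(2,ℝ)`, there is a real Bloch momentum `k` solving the dispersion relation
`det(M - e^{ikL} I) = 0` if and only if `tr M ∈ [-2, 2]`. -/
theorem exists_bloch_momentum_iff (M : Matrix (Fin 2) (Fin 2) ℝ) (hM : M.det = 1)
    (L : ℝ) (hL : 0 < L) :
    (∃ k : ℝ,
      (M.map (Complex.ofReal)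
        - Complex.exp (Complex.I * k * L) • (1 : Matrix (Fin 2) (Fin 2) ℂ)).det = 0)
      ↔ M.trace ∈ Set.Icc (-2 : ℝ) 2 := by
  have hMc : (M 0 0 : ℂ) * M 1 1 - M 0 1 * M 1 0 = 1 := by
    rw [Matrix.det_fin_two] at hM
    exact_mod_cast hM
  have hdet : ∀ z : ℂ, (M.map (Complex.ofReal) - z • (1 : Matrix (Fin 2) (Fin 2) ℂ)).det
      = z ^ 2 - (M.trace : ℂ) * z + 1 := by
    intro z
    rw [Matrix.det_fin_two, Matrix.trace_fin_two]
    simp [Matrix.one_apply]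
    linear_combination hMc
  constructor
  · rintro ⟨k, hk⟩
    set z := Complex.exp (Complex.I * k * L) with hz
    have habs : ‖z‖ = 1 := by
      rw [hz, Complex.norm_exp]
      have : (Complex.I * k * L).re = 0 := by simp
      rw [this, Real.exp_zero]
    have hzne : z ≠ 0 := Complex.exp_ne_zero _
    rw [hdet z] at hk
    have hconj : z * (starRingEnd ℂ) z = 1 := by
      rw [Complex.mul_conj, ← Complex.sq_norm, habs]
      norm_num
    have htr : (M.trace : ℂ) = z + (starRingEnd ℂ) z := by
      have : z * ((M.trace : ℂ) - z - (starRingEnd ℂ) z) = 0 := by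
        linear_combination -hk - hconj
      rcases mul_eq_zero.mp this with h | h
      · exact absurd h hzne
      · linear_combination h
    have htr' : M.trace = 2 * z.re := by
      have := htr
      rw [Complex.add_conj] at this
      exact_mod_cast this
    have hre : |z.re| ≤ 1 := by
      have := Complex.abs_re_le_norm z
      rw [habs] at this; exact this
    rw [htr']
    constructor <;> [linarith [abs_le.mp hre]; linarith [abs_le.mp hre]]
  · rintro ⟨h1, h2⟩
    set t := M.trace with ht
    refine ⟨Real.arccos (t / 2) / L, ?_⟩
    set θ := Real.arccos (t / 2) with hθ
    have hLz : (L : ℂ) ≠ 0 := by exact_mod_cast hL.ne'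
    have hexp : Complex.I * (((θ / L : ℝ)) : ℂ) * L = θ * Complex.I := by
      push_cast
      field_simp
    rw [hexp, hdet, Complex.exp_mul_I]
    have hcos : Real.cos θ = t / 2 := Real.cos_arccos (by linarith) (by linarith)
    have hsc : (Real.sin θ : ℝ) ^ 2 + (Real.cos θ) ^ 2 = 1 := Real.sin_sq_add_cos_sq θ
    have hcosC : (Complex.cos θ : ℂ) = (Real.cos θ : ℂ) := by
      rw [Complex.ofReal_cos]
    have hsinC : (Complex.sin θ : ℂ) = (Real.sin θ : ℂ) := by
      rw [Complex.ofReal_sin]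
    rw [hcosC, hsinC]
    have hscC : (Real.sin θ : ℂ) ^ 2 + (Real.cos θ : ℂ) ^ 2 = 1 := by exact_mod_cast hsc
    have hcosCC : (Real.cos θ : ℂ) = (t : ℂ) / 2 := by exact_mod_cast hcos
    have hI : Complex.I ^ 2 = -1 := Complex.I_sq
    linear_combination (2*((Real.cos θ:ℂ) + (Real.sin θ:ℂ)*Complex.I)) * hcosCC - hscC + ((Real.sin θ:ℂ))^2 * hI
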